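/- Fix a rational n₀ and suppose (m₀, k₀) satisfies m₀² + n₀² + k₀² = 3m₀n₀k₀ with m₀, n₀, k₀ nonzero. If (x₁, z₁) satisfies x₁² + n₀² + z₁² = 3x₁n₀z₁, then the point (x, z) with x = (x₁²n₀² + (x₁k₀ − z₁m₀)²)/(n₀²m₀) and z = (z₁²n₀² + (x₁k₀ − z₁m₀)²)/(n₀²k₀) also satisfies x² + n₀² + z² = 3x n₀ z. -/

import Mathlib

theorem quadric_doubling (n₀ m₀ k₀ x₁ z₁ : ℚ)
    (hm₀ : m₀ ≠ 0) (hn₀ : n₀ ≠ 0) (hk₀ : k₀ ≠ 0)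
    (hO : m₀^2 + n₀^2 + k₀^2 = 3*m₀*n₀*k₀)
    (hP : x₁^2 + n₀^2 + z₁^2 = 3*x₁*n₀*z₁) :
    ((x₁^2*n₀^2 + (x₁*k₀ - z₁*m₀)^2)/(n₀^2*m₀))^2 + n₀^2 +
      ((z₁^2*n₀^2 + (x₁*k₀ - z₁*m₀)^2)/(n₀^2*k₀))^2 =
    3 * ((x₁^2*n₀^2 + (x₁*k₀ - z₁*m₀)^2)/(n₀^2*m₀)) * n₀ *
        ((z₁^2*n₀^2 + (x₁*k₀ - z₁*m₀)^2)/(n₀^2*k₀)) := by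
  field_simp
  apply mul_left_cancel₀ (mul_ne_zero (mul_ne_zero (pow_ne_zero 8 hn₀) hm₀) hk₀)
  linear_combination (n₀^8*m₀*k₀^5*x₁^4 + -4*n₀^8*m₀^2*k₀^4*x₁^3*z₁ + -6*n₀^8*m₀^3*k₀^3*x₁^4 + 4*n₀^8*m₀^4*k₀^2*x₁^3*z₁ + n₀^8*m₀^5*k₀*x₁^4 + 18*n₀^9*m₀^3*k₀^3*x₁^3*z₁ + 12*n₀^9*m₀^4*k₀^2*x₁^4 + -6*n₀^9*m₀^5*k₀*x₁^3*z₁ + n₀^10*m₀*k₀^3*x₁^4 + n₀^10*m₀^3*k₀*x₁^4 + -6*n₀^10*m₀^3*k₀^3*x₁^2 + 4*n₀^10*m₀^4*k₀^2*x₁*z₁ + -36*n₀^10*m₀^4*k₀^2*x₁^3*z₁ + 2*n₀^10*m₀^5*k₀*x₁^2 + -9*n₀^10*m₀^5*k₀*x₁^4 + 3*n₀^11*m₀^2*k₀^2*x₁^4 + -6*n₀^11*m₀^3*k₀*x₁^3*z₁ + 12*n₀^11*m₀^4*k₀^2*x₁^2 + -6*n₀^11*m₀^5*k₀*x₁*z₁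 + 27*n₀^11*m₀^5*k₀*x₁^3*z₁ + -9*n₀^12*m₀^2*k₀^2*x₁^3*z₁ + 2*n₀^12*m₀^3*k₀*x₁^2 + -9*n₀^12*m₀^3*k₀*x₁^4 + n₀^12*m₀^5*k₀ + -9*n₀^12*m₀^5*k₀*x₁^2 + 3*n₀^13*m₀^2*k₀^2*x₁^2 + -6*n₀^13*m₀^3*k₀*x₁*z₁ + 27*n₀^13*m₀^3*k₀*x₁^3*z₁ + n₀^14*m₀^3*k₀ + -9*n₀^14*m₀^3*k₀*x₁^2) * hO + (6*n₀^8*m₀^3*k₀^5*x₁^2 + -4*n₀^8*m₀^4*k₀^4*x₁*z₁ + n₀^8*m₀^5*k₀^3*z₁^2 + 5*n₀^8*m₀^5*k₀^3*x₁^2 + -4*n₀^8*m₀^6*k₀^2*x₁*z₁ + n₀^8*m₀^7*k₀*z₁^2 + -1*n₀^8*m₀^7*k₀*x₁^2 + -30*n₀^9*m₀^4*k₀^4*x₁^2 + 15*n₀^9*m₀^5*k₀^3*x₁*z₁ + -3*n₀^9*m₀^6*k₀^2*z₁^2 + -9*n₀^9*m₀^6*k₀^2*x₁^2 + 3*n₀^9*m₀^7*k₀*x₁*z₁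 + 4*n₀^10*m₀^3*k₀^3*x₁^2 + -4*n₀^10*m₀^4*k₀^2*x₁*z₁ + 2*n₀^10*m₀^5*k₀*z₁^2 + -2*n₀^10*m₀^5*k₀*x₁^2 + -1*n₀^10*m₀^5*k₀^3 + 45*n₀^10*m₀^5*k₀^3*x₁^2 + -9*n₀^10*m₀^6*k₀^2*x₁*z₁ + -1*n₀^10*m₀^7*k₀ + 9*n₀^10*m₀^7*k₀*x₁^2 + -3*n₀^11*m₀^2*k₀^4*x₁^2 + 6*n₀^11*m₀^3*k₀^3*x₁*z₁ + -3*n₀^11*m₀^4*k₀^2*z₁^2 + -12*n₀^11*m₀^4*k₀^2*x₁^2 + 6*n₀^11*m₀^5*k₀*x₁*z₁ + 3*n₀^11*m₀^6*k₀^2 + -27*n₀^11*m₀^6*k₀^2*x₁^2 + n₀^12*m₀^3*k₀*z₁^2 + -1*n₀^12*m₀^3*k₀*x₁^2 + 18*n₀^12*m₀^3*k₀^3*x₁^2 + -9*n₀^12*m₀^4*k₀^2*x₁*z₁ + -2*n₀^12*m₀^5*k₀ + 18*n₀^12*m₀^5*k₀*x₁^2 + -3*n₀^13*m₀^2*k₀^2*x₁^2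 + 3*n₀^13*m₀^3*k₀*x₁*z₁ + 3*n₀^13*m₀^4*k₀^2 + -27*n₀^13*m₀^4*k₀^2*x₁^2 + -1*n₀^14*m₀^3*k₀ + 9*n₀^14*m₀^3*k₀*x₁^2) * hP
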